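/- If (≿, c) has a justifiability representation, then c satisfies Irrelevance of Unjustifiable Alternatives (IUA): for any a and any finite menu A containing a, if a ≿ b for every b ∈ c(A) and a ∉ c(A), then for every finite B ⊃ A we have c(B \ {a}) = c(B). -/
import Mathlib


open Finset

/-- A total (weak) order: complete, transitive, antisymmetric. -/
def TotalOrderRel {α : Type*} (r : α → α → Prop) : Prop :=
  (∀ a b : α, r a b ∨ r b a) ∧ Transitive r ∧ ∀ a b : α, r a b → r b a → a = b

/-- The set of `r`-maximal elements of a set `S`. -/
def argmaxOn {α : Type*} (r : α → α → Prop) (S : Set α) : Set α :=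
  {x ∈ S | ∀ y ∈ S, r x y}

/-- The justifiable set `M(A)`: union over justifications of their maximizers on `A`. -/
def justSet {α : Type*} (M : Set (α → α → Prop)) (A : Finset α) : Set α :=
  ⋃ r ∈ M, argmaxOn r (A : Set α)

/-- A justifiability representation for `(pref, c)`. -/
def JustRep {α : Type*} (pref : α → α → Prop) (c : Finset α → Finset α)
    (M : Set (α → α → Prop)) : Prop :=
  M.Nonempty ∧ (∀ r ∈ M, TotalOrderRel r) ∧
    ∀ A : Finset α, A.Nonempty → (c A : Set α) = argmaxOn pref (justSet M A)

lemma exists_rmax {α : Type*} (r : α → α → Prop)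
    (hc : ∀ a b : α, r a b ∨ r b a) (ht : Transitive r)
    (S : Finset α) (hS : S.Nonempty) : ∃ x ∈ S, ∀ y ∈ S, r x y := by
  classical
  induction S using Finset.induction_on with
  | empty => simp at hS
  | @insert a S ha ih =>
    rcases S.eq_empty_or_nonempty with h | h
    · subst h
      exact ⟨a, by simp, by simpa using (hc a a).elim id id⟩
    · obtain ⟨x, hx, hmax⟩ := ih h
      rcases hc a x with hax | hxa
      · refine ⟨a, by simp, ?_⟩
        intro y hy
        rcases Finset.mem_insert.mp hy with rfl | hy
        · exact (hc _ _).elim id id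
        · exact ht hax (hmax y hy)
      · refine ⟨x, by simp [hx], ?_⟩
        intro y hy
        rcases Finset.mem_insert.mp hy with rfl | hy
        · exact hxa
        · exact hmax y hy

/-- a justifiability representation implies IUA. -/
theorem justRep_IUA {α : Type*} [DecidableEq α] (pref : α → α → Prop)
    (c : Finset α → Finset α)
    (hcomp : ∀ a b : α, pref a b ∨ pref b a) (htrans : Transitive pref)
    (hsub : ∀ A : Finset α, c A ⊆ A)
    (hne : ∀ A : Finset α, A.Nonempty → (c A).Nonempty)
    (M : Set (α → α → Prop)) (hrep : JustRep pref c M) :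
    ∀ (A : Finset α) (a : α), a ∈ A → (∀ b ∈ c A, pref a b) → a ∉ c A →
      ∀ B : Finset α, A ⊆ B → c (B.erase a) = c B := by
  intro A a haA hdom hanc B hAB
  obtain ⟨hMne, hMto, hM⟩ := hrep
  have hAne : A.Nonempty := ⟨a, haA⟩
  obtain ⟨b, hb⟩ := hne A hAne
  -- a is not in justSet M A
  have haj : a ∉ justSet M A := by
    intro haj
    apply hanc
    have hbA : b ∈ argmaxOn pref (justSet M A) := by
      rw [← hM A hAne]; exact_mod_cast hb
    have : a ∈ argmaxOn pref (justSet M A) := by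
      refine ⟨haj, fun y hy => htrans (hdom b hb) (hbA.2 y hy)⟩
    have := (hM A hAne) ▸ this
    exact_mod_cast this
  -- hence for each r ∈ M, a is not r-maximal on A
  have hBne : (B.erase a).Nonempty := by
    refine ⟨b, Finset.mem_erase.mpr ⟨?_, hAB (hsub A hb)⟩⟩
    rintro rfl; exact hanc hb
  -- justSets coincide
  have hjust : justSet M (B.erase a) = justSet M B := by
    apply Set.eq_of_subset_of_subset
    all_goals
      intro x hx
      simp only [justSet, Set.mem_iUnion] at hx ⊢
      obtain ⟨r, hrM, hx⟩ := hx
      obtain ⟨hrc, hrt, hra⟩ := hMto r hrM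
      refine ⟨r, hrM, ?_⟩
    · -- x max of B.erase a → max of B
      obtain ⟨hxmem, hxmax⟩ := hx
      have hxB : x ∈ B := Finset.mem_of_mem_erase (by exact_mod_cast hxmem)
      -- find max z of B
      obtain ⟨z, hzB, hzmax⟩ := exists_rmax r hrc hrt B ⟨x, hxB⟩
      have hza : z ≠ a := by
        rintro rfl
        exact haj (Set.mem_iUnion.mpr ⟨r, Set.mem_iUnion.mpr ⟨hrM,
          ⟨by exact_mod_cast haA, fun y hy => hzmax y (hAB (by exact_mod_cast hy))⟩⟩⟩)
      have hxa : r x a := hrt (hxmax z (by exact_mod_cast Finset.mem_erase.mpr ⟨hza, hzB⟩))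
        (hzmax a (hAB haA))
      refine ⟨by exact_mod_cast hxB, ?_⟩
      intro y hy
      have hyB : y ∈ B := by exact_mod_cast hy
      by_cases hya : y = a
      · subst hya; exact hxa
      · exact hxmax y (by exact_mod_cast Finset.mem_erase.mpr ⟨hya, hyB⟩)
    · -- x max of B → max of B.erase a
      obtain ⟨hxmem, hxmax⟩ := hx
      have hxB : x ∈ B := by exact_mod_cast hxmem
      have hxa : x ≠ a := by
        rintro rfl
        exact haj (Set.mem_iUnion.mpr ⟨r, Set.mem_iUnion.mpr ⟨hrM,
          ⟨by exact_mod_cast haA, fun y hy => hxmax y (hAB (by exact_mod_cast hy))⟩⟩⟩)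
      refine ⟨by exact_mod_cast Finset.mem_erase.mpr ⟨hxa, hxB⟩, ?_⟩
      intro y hy
      exact hxmax y (Finset.mem_of_mem_erase (by exact_mod_cast hy))
  have hB : B.Nonempty := ⟨a, hAB haA⟩
  have : (c (B.erase a) : Set α) = (c B : Set α) := by
    rw [hM _ hBne, hM _ hB, hjust]
  exact_mod_cast this
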